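/- arXiv:1610.08831 — 7 statements merged into one kernel-verified Lean document; each statement's English description precedes it below -/
import Mathlib

section
/- Morphology property of the operator: let u : ℝ² → ℝ be twice differentiable and g : ℝ → ℝ be twice differentiable. Then G[g ∘ u](x,y) = (g′(u(x,y)))³ · G[u](x,y) for all (x,y) ∈ ℝ², and consequently cbrt(G[g ∘ u]) = g′(u) · cbrt(G[u]) wherever g′(u) ≥ 0. -/
/-- The real cube root: `cbrt r = sgn(r) · |r|^{1/3}`. -/
noncomputable def cbrt (r : ℝ) : ℝ := Real.sign r * |r| ^ ((1 : ℝ) / 3)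

/-- `G[u] = u_{xx} u_y² − 2 u_x u_y u_{xy} + u_{yy} u_x²`, where the partial derivatives
are taken via the (iterated) Fréchet derivative evaluated at the coordinate directions. -/
noncomputable def Gop (u : ℝ × ℝ → ℝ) (p : ℝ × ℝ) : ℝ :=
  let ux := fderiv ℝ u p (1, 0)
  let uy := fderiv ℝ u p (0, 1)
  let uxx := fderiv ℝ (fun q => fderiv ℝ u q (1, 0)) p (1, 0)
  let uxy := fderiv ℝ (fun q => fderiv ℝ u q (1, 0)) p (0, 1)
  let uyy := fderiv ℝ (fun q => fderiv ℝ u q (0, 1)) p (0, 1)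
  uxx * uy ^ 2 - 2 * ux * uy * uxy + uyy * ux ^ 2

lemma cbrt_cube_mul (c X : ℝ) (hc : 0 ≤ c) : cbrt (c ^ 3 * X) = c * cbrt X := by
  unfold cbrt
  have habs : |c ^ 3 * X| = c ^ 3 * |X| := by
    rw [abs_mul, abs_of_nonneg (by positivity)]
  have hpow : (c ^ 3 * |X|) ^ ((1:ℝ)/3) = c * |X| ^ ((1:ℝ)/3) := by
    rw [Real.mul_rpow (by positivity) (abs_nonneg X)]
    congr 1
    rw [← Real.rpow_natCast c 3, ← Real.rpow_mul hc]
    norm_num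
  rcases hc.eq_or_lt with h | h
  · simp [← h]
  · have hsign : Real.sign (c ^ 3 * X) = Real.sign X := by
      rcases lt_trichotomy X 0 with hX | hX | hX
      · rw [Real.sign_of_neg hX, Real.sign_of_neg (mul_neg_of_pos_of_neg (by positivity) hX)]
      · simp [hX]
      · rw [Real.sign_of_pos hX, Real.sign_of_pos (by positivity)]
    rw [hsign, habs, hpow]; ring

/-- Morphology property of the operator: `G[g ∘ u] = (g′(u))³ G[u]`, and consequently
`cbrt (G[g ∘ u]) = g′(u) · cbrt (G[u])` wherever `g′(u) ≥ 0`. -/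
theorem affine_curvature_morphology (u : ℝ × ℝ → ℝ) (g : ℝ → ℝ)
    (hu : ContDiff ℝ 2 u) (hg : ContDiff ℝ 2 g) :
    (∀ p : ℝ × ℝ, Gop (fun q => g (u q)) p = (deriv g (u p)) ^ 3 * Gop u p) ∧
      (∀ p : ℝ × ℝ, 0 ≤ deriv g (u p) →
        cbrt (Gop (fun q => g (u q)) p) = deriv g (u p) * cbrt (Gop u p)) := by
  have hud : Differentiable ℝ u := hu.differentiable two_ne_zero
  have hgd : Differentiable ℝ g := hg.differentiable two_ne_zero
  have hgder : ContDiff ℝ 1 (deriv g) :=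
    ((contDiff_succ_iff_deriv (n := 1)).mp (by exact_mod_cast hg)).2.2
  have chain : ∀ (h : ℝ → ℝ), Differentiable ℝ h → ∀ (p v : _),
      fderiv ℝ (fun q => h (u q)) p v = deriv h (u p) * fderiv ℝ u p v := by
    intro h hh p v
    rw [show (fun q => h (u q)) = h ∘ u from rfl,
      fderiv_comp p (hh (u p)) (hud p)]
    simp only [ContinuousLinearMap.comp_apply]
    rw [show fderiv ℝ u p v = (fderiv ℝ u p v) • (1:ℝ) by simp,
      (fderiv ℝ h (u p)).map_smul]
    simp [fderiv_apply_one_eq_deriv, mul_comm]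
  have hfd : ∀ v : ℝ × ℝ, Differentiable ℝ (fun q => fderiv ℝ u q v) := by
    intro v
    exact ((hu.fderiv_right (m := 1) (le_refl _)).clm_apply contDiff_const).differentiable
      one_ne_zero
  have hgud : Differentiable ℝ (fun q => deriv g (u q)) :=
    (hgder.comp (hu.of_le one_le_two)).differentiable one_ne_zero
  have h1 : ∀ (q v : _), fderiv ℝ (fun r => g (u r)) q v = deriv g (u q) * fderiv ℝ u q v :=
    chain g hgd
  have h2 : ∀ (v w : ℝ × ℝ) (p : ℝ × ℝ),
      fderiv ℝ (fun q => fderiv ℝ (fun r => g (u r)) q v) p w =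
        deriv (deriv g) (u p) * fderiv ℝ u p w * fderiv ℝ u p v
          + deriv g (u p) * fderiv ℝ (fun q => fderiv ℝ u q v) p w := by
    intro v w p
    have heq : (fun q => fderiv ℝ (fun r => g (u r)) q v)
        = fun q => (fun r => deriv g (u r)) q * (fun r => fderiv ℝ u r v) q :=
      funext fun q => h1 q v
    rw [heq, fderiv_fun_mul (hgud p) ((hfd v) p)]
    simp only [ContinuousLinearMap.add_apply, ContinuousLinearMap.smul_apply, smul_eq_mul]
    rw [chain (deriv g) (hgder.differentiable one_ne_zero) p w]
    ring
  have main : ∀ p : ℝ × ℝ, Gop (fun q => g (u q)) p = (deriv g (u p)) ^ 3 * Gop u p := by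
    intro p
    simp only [Gop]
    rw [h1 p (1,0), h1 p (0,1), h2 (1,0) (1,0) p, h2 (1,0) (0,1) p, h2 (0,1) (0,1) p]
    ring
  refine ⟨main, fun p hp => ?_⟩
  rw [main p, cbrt_cube_mul _ _ hp]
end

section
/- Affine invariance of the operator: let u : ℝ² → ℝ be twice differentiable, A a real 2×2 matrix, b ∈ ℝ², and φ(x) := Ax + b. Then G[u ∘ φ](x) = (det A)² · G[u](φ(x)) for all x ∈ ℝ², and consequently cbrt(G[u ∘ φ]) = (det A)^{2/3} · cbrt(G[u]) ∘ φ. -/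
lemma cbrt_sq_mul (c g : ℝ) : cbrt (c ^ 2 * g) = (c ^ 2) ^ ((1 : ℝ) / 3) * cbrt g := by
  rcases eq_or_ne c 0 with hc | hc
  · simp [hc, cbrt, Real.zero_rpow (by norm_num : (1 : ℝ) / 3 ≠ 0)]
  · have hc2 : 0 < c ^ 2 := by positivity
    unfold cbrt
    have habs : |c ^ 2 * g| ^ ((1 : ℝ) / 3) = (c ^ 2) ^ ((1 : ℝ) / 3) * |g| ^ ((1 : ℝ) / 3) := by
      rw [abs_mul, abs_of_pos hc2, Real.mul_rpow hc2.le (abs_nonneg g)]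
    have hsign : Real.sign (c ^ 2 * g) = Real.sign g := by
      rcases lt_trichotomy g 0 with h | h | h
      · rw [Real.sign_of_neg h, Real.sign_of_neg (mul_neg_of_pos_of_neg hc2 h)]
      · simp [h]
      · rw [Real.sign_of_pos h, Real.sign_of_pos (mul_pos hc2 h)]
    rw [hsign, habs]; ring

/-- Affine invariance of the operator: for the affine map `φ(x) = Ax + b` given by the
2×2 matrix with entries `a11 a12 ; a21 a22` and translation `(b1, b2)`, one has
`G[u ∘ φ](x) = (det A)² G[u](φ(x))` and
`cbrt (G[u ∘ φ]) = ((det A)²)^{1/3} · cbrt (G[u]) ∘ φ`. -/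
theorem affine_curvature_affine_invariance (u : ℝ × ℝ → ℝ) (hu : ContDiff ℝ 2 u)
    (a11 a12 a21 a22 b1 b2 : ℝ) (p : ℝ × ℝ) :
    Gop (fun q => u (a11 * q.1 + a12 * q.2 + b1, a21 * q.1 + a22 * q.2 + b2)) p =
        (a11 * a22 - a12 * a21) ^ 2 *
          Gop u (a11 * p.1 + a12 * p.2 + b1, a21 * p.1 + a22 * p.2 + b2) ∧
      cbrt (Gop (fun q => u (a11 * q.1 + a12 * q.2 + b1, a21 * q.1 + a22 * q.2 + b2)) p) =
        ((a11 * a22 - a12 * a21) ^ 2) ^ ((1 : ℝ) / 3) *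
          cbrt (Gop u (a11 * p.1 + a12 * p.2 + b1, a21 * p.1 + a22 * p.2 + b2)) := by
  have main : Gop (fun q => u (a11 * q.1 + a12 * q.2 + b1, a21 * q.1 + a22 * q.2 + b2)) p =
      (a11 * a22 - a12 * a21) ^ 2 *
        Gop u (a11 * p.1 + a12 * p.2 + b1, a21 * p.1 + a22 * p.2 + b2) := by
    set A : (ℝ × ℝ) →L[ℝ] (ℝ × ℝ) :=
      ((a11 • (ContinuousLinearMap.fst ℝ ℝ ℝ) + a12 • (ContinuousLinearMap.snd ℝ ℝ ℝ)).prod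
        (a21 • (ContinuousLinearMap.fst ℝ ℝ ℝ) + a22 • (ContinuousLinearMap.snd ℝ ℝ ℝ))) with hA
    set φ : ℝ × ℝ → ℝ × ℝ :=
      fun q => (a11 * q.1 + a12 * q.2 + b1, a21 * q.1 + a22 * q.2 + b2) with hφdef
    have hAapp : ∀ q : ℝ × ℝ, A q = (a11 * q.1 + a12 * q.2, a21 * q.1 + a22 * q.2) := by
      intro q
      simp [hA, ContinuousLinearMap.prod_apply, smul_eq_mul]
    have hφ : ∀ q, HasFDerivAt φ A q := by
      intro q
      have h := (A.hasFDerivAt (x := q)).add_const ((b1, b2) : ℝ × ℝ)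
      have hfun : (fun q : ℝ × ℝ => A q + ((b1, b2) : ℝ × ℝ)) = φ := by
        funext q; rw [hAapp q]; simp [hφdef, Prod.ext_iff]
      rwa [hfun] at h
    have hud : Differentiable ℝ u := hu.differentiable two_ne_zero
    have hDd : Differentiable ℝ (fderiv ℝ u) :=
      (hu.fderiv_right (m := 1) (by norm_num)).differentiable one_ne_zero
    set z : ℝ × ℝ := (a11 * p.1 + a12 * p.2 + b1, a21 * p.1 + a22 * p.2 + b2) with hz
    have hφp : φ p = z := rfl
    -- first derivative of the composition
    have h1 : ∀ q v, fderiv ℝ (fun q => u (φ q)) q v = fderiv ℝ u (φ q) (A v) := by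
      intro q v
      have h : HasFDerivAt (fun q => u (φ q)) ((fderiv ℝ u (φ q)).comp A) q :=
        (hud (φ q)).hasFDerivAt.comp q (hφ q)
      rw [h.fderiv]; rfl
    -- second derivative of the composition
    set H : (ℝ × ℝ) →L[ℝ] (ℝ × ℝ) →L[ℝ] ℝ := fderiv ℝ (fderiv ℝ u) z with hH
    have h2 : ∀ v w, fderiv ℝ (fun q => fderiv ℝ (fun q => u (φ q)) q v) p w
        = H (A w) (A v) := by
      intro v w
      have heq : (fun q => fderiv ℝ (fun q => u (φ q)) q v)
          = fun q => (fderiv ℝ u (φ q)) (A v) := funext fun q => h1 q v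
      rw [heq]
      have hc : HasFDerivAt (fun q => (fderiv ℝ u (φ q)) (A v))
          ((ContinuousLinearMap.apply ℝ ℝ (A v)).comp (H.comp A)) p :=
        (ContinuousLinearMap.apply ℝ ℝ (A v)).hasFDerivAt.comp p
          (((hDd (φ p)).hasFDerivAt).comp p (hφ p))
      rw [hc.fderiv]; rfl
    -- second derivative of u itself
    have h3 : ∀ v w, fderiv ℝ (fun q => fderiv ℝ u q v) z w = H w v := by
      intro v w
      have hc : HasFDerivAt (fun q => (fderiv ℝ u q) v)
          ((ContinuousLinearMap.apply ℝ ℝ v).comp H) z :=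
        (ContinuousLinearMap.apply ℝ ℝ v).hasFDerivAt.comp z (hDd z).hasFDerivAt
      rw [hc.fderiv]; rfl
    -- symmetry of the second derivative
    have hsym : ∀ v w, H v w = H w v :=
      second_derivative_symmetric (fun y => (hud y).hasFDerivAt) (hDd z).hasFDerivAt
    -- linear expansion helpers
    have hpair : ∀ x y : ℝ, ((x, y) : ℝ × ℝ)
        = x • ((1 : ℝ), (0 : ℝ)) + y • ((0 : ℝ), (1 : ℝ)) := by
      intro x y; simp [Prod.ext_iff]
    have hlin : ∀ (F : (ℝ × ℝ) →L[ℝ] ℝ) (x y : ℝ),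
        F (x, y) = x * F (1, 0) + y * F (0, 1) := by
      intro F x y
      rw [hpair x y, map_add, map_smul, map_smul]; simp [smul_eq_mul]
    have hbil : ∀ x y zx zy : ℝ, H (x, y) (zx, zy)
        = x * zx * H (1, 0) (1, 0) + x * zy * H (1, 0) (0, 1)
          + y * zx * H (0, 1) (1, 0) + y * zy * H (0, 1) (0, 1) := by
      intro x y zx zy
      rw [hpair x y, map_add, map_smul, map_smul]
      simp only [ContinuousLinearMap.add_apply, ContinuousLinearMap.coe_smul',
        Pi.smul_apply, smul_eq_mul]
      rw [hlin (H (1, 0)) zx zy, hlin (H (0, 1)) zx zy]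
      ring
    have hA1 : A ((1 : ℝ), (0 : ℝ)) = (a11, a21) := by rw [hAapp]; norm_num
    have hA2 : A ((0 : ℝ), (1 : ℝ)) = (a12, a22) := by rw [hAapp]; norm_num
    have hGfun : (fun q : ℝ × ℝ => u (a11 * q.1 + a12 * q.2 + b1, a21 * q.1 + a22 * q.2 + b2))
        = fun q => u (φ q) := rfl
    rw [hGfun]
    simp only [Gop]
    rw [h1 p (1, 0), h1 p (0, 1), h2 (1, 0) (1, 0), h2 (1, 0) (0, 1), h2 (0, 1) (0, 1),
      hφp, h3 (1, 0) (1, 0), h3 (1, 0) (0, 1), h3 (0, 1) (0, 1), hA1, hA2,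
      hlin (fderiv ℝ u z) a11 a21, hlin (fderiv ℝ u z) a12 a22,
      hbil a11 a21 a11 a21, hbil a12 a22 a11 a21, hbil a12 a22 a12 a22,
      hsym (0, 1) (1, 0)]
    ring
  refine ⟨main, ?_⟩
  rw [main, cbrt_sq_mul]
end

section
/- Morphology (relabelling) property of classical solutions of the affine curvature flow: let u : ℝ² × ℝ → ℝ be twice differentiable in the space variables and differentiable in time with (∂_t u(x,y,t))³ = G[u(·,·,t)](x,y) for all (x,y,t), and let g : ℝ → ℝ be twice differentiable. Then v := g ∘ u satisfies (∂_t v(x,y,t))³ = G[v(·,·,t)](x,y) for all (x,y,t). -/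
/-- For a real-valued function of a real variable, the Fréchet derivative applied to `c`
is `c * deriv f y`. -/
lemma fderiv_apply_eq_mul_deriv (f : ℝ → ℝ) (y c : ℝ) :
    fderiv ℝ f y c = c * deriv f y := by
  have := (fderiv ℝ f y).map_smul c (1 : ℝ)
  simpa [fderiv_apply_one_eq_deriv, smul_eq_mul] using this

/-- Chain rule, applied form. -/
lemma fderiv_comp_apply_chain (g : ℝ → ℝ) (w : ℝ × ℝ → ℝ) (q : ℝ × ℝ) (d : ℝ × ℝ)
    (hg : DifferentiableAt ℝ g (w q)) (hw : DifferentiableAt ℝ w q) :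
    fderiv ℝ (fun x => g (w x)) q d = deriv g (w q) * fderiv ℝ w q d := by
  have h := fderiv_comp q hg hw
  have : fderiv ℝ (fun x => g (w x)) q d = fderiv ℝ g (w q) (fderiv ℝ w q d) := by
    rw [show (fun x => g (w x)) = g ∘ w from rfl, h]; rfl
  rw [this, fderiv_apply_eq_mul_deriv, mul_comm]

/-- Key computation: `G[g ∘ w] = (g'(w))³ · G[w]`. -/
lemma Gop_comp (g : ℝ → ℝ) (w : ℝ × ℝ → ℝ) (hg : ContDiff ℝ 2 g) (hw : ContDiff ℝ 2 w)
    (p : ℝ × ℝ) : Gop (fun q => g (w q)) p = (deriv g (w p)) ^ 3 * Gop w p := by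
  -- differentiability facts
  have hgd : Differentiable ℝ g := hg.differentiable (by norm_num)
  have hwd : Differentiable ℝ w := hw.differentiable (by norm_num)
  have hg' : ContDiff ℝ 1 (deriv g) := by
    have h2 : (2 : WithTop ℕ∞) = 1 + 1 := by norm_num
    rw [h2] at hg
    exact (contDiff_succ_iff_deriv.mp hg).2.2
  have hg'd : Differentiable ℝ (deriv g) := hg'.differentiable (by norm_num)
  have hwfd : ∀ d : ℝ × ℝ, Differentiable ℝ (fun q => fderiv ℝ w q d) := fun d =>
    ((hw.fderiv_right (m := 1) (by norm_num)).clm_apply contDiff_const).differentiable (by norm_num)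
  -- first derivatives of the composition
  have h1 : ∀ (d : ℝ × ℝ),
      (fun q => fderiv ℝ (fun x => g (w x)) q d) = fun q => deriv g (w q) * fderiv ℝ w q d := by
    intro d
    funext q
    exact fderiv_comp_apply_chain g w q d (hgd _) (hwd _)
  -- derivative of q ↦ deriv g (w q)
  have hgw : ∀ (q : ℝ × ℝ) (e : ℝ × ℝ),
      fderiv ℝ (fun x => deriv g (w x)) q e = deriv (deriv g) (w q) * fderiv ℝ w q e :=
    fun q e => fderiv_comp_apply_chain (deriv g) w q e (hg'd _) (hwd _)
  have hgwd : Differentiable ℝ (fun q => deriv g (w q)) := hg'd.comp hwd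
  -- second derivatives of the composition
  have h2 : ∀ (d e : ℝ × ℝ),
      fderiv ℝ (fun q => fderiv ℝ (fun x => g (w x)) q d) p e =
        deriv (deriv g) (w p) * fderiv ℝ w p e * fderiv ℝ w p d +
          deriv g (w p) * fderiv ℝ (fun q => fderiv ℝ w q d) p e := by
    intro d e
    rw [h1 d]
    have := fderiv_fun_mul (𝕜 := ℝ) (hgwd.differentiableAt (x := p))
      ((hwfd d).differentiableAt (x := p))
    rw [this]
    simp only [ContinuousLinearMap.add_apply, ContinuousLinearMap.smul_apply, smul_eq_mul]
    rw [hgw p e]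
    ring
  -- unfold Gop and conclude by ring
  simp only [Gop]
  have e10 : fderiv ℝ (fun x => g (w x)) p (1, 0) = deriv g (w p) * fderiv ℝ w p (1, 0) :=
    fderiv_comp_apply_chain g w p _ (hgd _) (hwd _)
  have e01 : fderiv ℝ (fun x => g (w x)) p (0, 1) = deriv g (w p) * fderiv ℝ w p (0, 1) :=
    fderiv_comp_apply_chain g w p _ (hgd _) (hwd _)
  rw [h2 (1, 0) (1, 0), h2 (1, 0) (0, 1), h2 (0, 1) (0, 1), e10, e01]
  ring

/-- Morphology (relabelling) property of classical solutions of the affine curvature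
flow: if `(∂ₜ u)³ = G[u(·,·,t)]` pointwise and `g` is twice differentiable, then
`v = g ∘ u` satisfies `(∂ₜ v)³ = G[v(·,·,t)]` pointwise. -/
theorem affine_curvature_flow_morphology (u : ℝ × ℝ → ℝ → ℝ) (g : ℝ → ℝ)
    (hu : ∀ t : ℝ, ContDiff ℝ 2 (fun p => u p t))
    (hut : ∀ p : ℝ × ℝ, Differentiable ℝ (u p))
    (hg : ContDiff ℝ 2 g)
    (hsol : ∀ (p : ℝ × ℝ) (t : ℝ), (deriv (u p) t) ^ 3 = Gop (fun q => u q t) p) :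
    ∀ (p : ℝ × ℝ) (t : ℝ),
      (deriv (fun s : ℝ => g (u p s)) t) ^ 3 = Gop (fun q => g (u q t)) p := by
  intro p t
  have hderiv : deriv (fun s : ℝ => g (u p s)) t = deriv g (u p t) * deriv (u p) t := by
    exact deriv_comp t ((hg.differentiable (by norm_num)) (u p t)) ((hut p) t)
  rw [hderiv, Gop_comp g (fun q => u q t) hg (hu t) p, ← hsol p t]
  ring
end

section
/- Exact ellipse solution of the affine curvature flow: given a, b > 0, define u(x,y,t) := t + (3/4)·((b/a)x² + (a/b)y²)^{2/3}. Then for every t ∈ ℝ and every (x,y) ≠ (0,0), u is twice differentiable in space and differentiable in time at (x,y,t), ∂_t u = 1, and G[u(·,·,t)](x,y) = 1; that is, u is a classical solution of u_t = |∇u|·k[u]^{1/3} away from the origin. -/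
/-- Exact ellipse solution of the affine curvature flow: with
`u(x,y,t) = t + (3/4)((b/a)x² + (a/b)y²)^{2/3}`, away from the spatial origin the
spatial part is twice differentiable, `∂ₜ u = 1`, and `G[u(·,·,t)] = 1`. -/
theorem affine_curvature_flow_ellipse_solution (a b : ℝ) (ha : 0 < a) (hb : 0 < b) :
    ∀ p : ℝ × ℝ, p ≠ (0, 0) → ∀ t : ℝ,
      ContDiffAt ℝ 2
        (fun q : ℝ × ℝ => (3 / 4) * ((b / a) * q.1 ^ 2 + (a / b) * q.2 ^ 2) ^ ((2 : ℝ) / 3))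
        p ∧
      HasDerivAt
        (fun s : ℝ => s + (3 / 4) * ((b / a) * p.1 ^ 2 + (a / b) * p.2 ^ 2) ^ ((2 : ℝ) / 3))
        1 t ∧
      Gop (fun q : ℝ × ℝ =>
          t + (3 / 4) * ((b / a) * q.1 ^ 2 + (a / b) * q.2 ^ 2) ^ ((2 : ℝ) / 3)) p = 1 := by
  intro p hp t
  have hc1 : (0:ℝ) < b / a := div_pos hb ha
  have hc2 : (0:ℝ) < a / b := div_pos ha hb
  set r : ℝ × ℝ → ℝ := fun q => (b / a) * q.1 ^ 2 + (a / b) * q.2 ^ 2 with hrdef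
  have hrpos : ∀ q : ℝ × ℝ, q ≠ (0, 0) → 0 < r q := by
    intro q hq
    have h : q.1 ≠ 0 ∨ q.2 ≠ 0 := by
      by_contra h
      push_neg at h
      exact hq (Prod.ext h.1 h.2)
    rcases h with h | h
    · have h1 : 0 < q.1 ^ 2 := by positivity
      have h2 : 0 ≤ (a/b) * q.2 ^ 2 := by positivity
      have := mul_pos hc1 h1
      simp only [hrdef]; linarith
    · have h1 : 0 < q.2 ^ 2 := by positivity
      have h2 : 0 ≤ (b/a) * q.1 ^ 2 := by positivity
      have := mul_pos hc2 h1
      simp only [hrdef]; linarith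
  -- derivative of r
  have hr : ∀ q : ℝ × ℝ, HasFDerivAt r
      ((b/a) • (q.1 • (ContinuousLinearMap.fst ℝ ℝ ℝ) + q.1 • (ContinuousLinearMap.fst ℝ ℝ ℝ))
        + (a/b) • (q.2 • (ContinuousLinearMap.snd ℝ ℝ ℝ) + q.2 • (ContinuousLinearMap.snd ℝ ℝ ℝ))) q := by
    intro q
    have h1 : HasFDerivAt (fun q : ℝ × ℝ => q.1 ^ 2)
        (q.1 • (ContinuousLinearMap.fst ℝ ℝ ℝ) + q.1 • (ContinuousLinearMap.fst ℝ ℝ ℝ)) q := by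
      have := (hasFDerivAt_fst (𝕜 := ℝ) (p := q) (E := ℝ) (F := ℝ)).mul
        (hasFDerivAt_fst (𝕜 := ℝ) (p := q) (E := ℝ) (F := ℝ))
      simpa [sq, Pi.mul_def] using this
    have h2 : HasFDerivAt (fun q : ℝ × ℝ => q.2 ^ 2)
        (q.2 • (ContinuousLinearMap.snd ℝ ℝ ℝ) + q.2 • (ContinuousLinearMap.snd ℝ ℝ ℝ)) q := by
      have := (hasFDerivAt_snd (𝕜 := ℝ) (p := q) (E := ℝ) (F := ℝ)).mul
        (hasFDerivAt_snd (𝕜 := ℝ) (p := q) (E := ℝ) (F := ℝ))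
      simpa [sq, Pi.mul_def] using this
    exact (h1.const_mul _).add (h2.const_mul _)
  set Lr : ℝ × ℝ → (ℝ × ℝ →L[ℝ] ℝ) := fun q =>
      (b/a) • (q.1 • (ContinuousLinearMap.fst ℝ ℝ ℝ) + q.1 • (ContinuousLinearMap.fst ℝ ℝ ℝ))
        + (a/b) • (q.2 • (ContinuousLinearMap.snd ℝ ℝ ℝ) + q.2 • (ContinuousLinearMap.snd ℝ ℝ ℝ))
    with hLrdef
  -- derivative of u in space
  set e : ℝ := (2:ℝ)/3 - 1 with hedef
  set Dt : ℝ × ℝ → (ℝ × ℝ →L[ℝ] ℝ) := fun q =>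
      (3/4 : ℝ) • (((2:ℝ)/3 * r q ^ e) • Lr q) with hDtdef
  have hu : ∀ q : ℝ × ℝ, q ≠ (0,0) → HasFDerivAt
      (fun q : ℝ × ℝ => t + 3 / 4 * (r q) ^ ((2:ℝ)/3)) (Dt q) q := by
    intro q hq
    exact (((hr q).rpow_const (Or.inl (hrpos q hq).ne')).const_mul (3/4 : ℝ)).const_add t
  have hnhds : ∀ᶠ q in nhds p, q ≠ (0,0) :=
    (isOpen_compl_singleton.eventually_mem (by simpa using hp))
  have hfd : ∀ᶠ q in nhds p, fderiv ℝ
      (fun q : ℝ × ℝ => t + 3 / 4 * (r q) ^ ((2:ℝ)/3)) q = Dt q := by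
    filter_upwards [hnhds] with q hq using (hu q hq).fderiv
  set g1 : ℝ × ℝ → ℝ := fun q => (3/4 : ℝ) * ((2:ℝ)/3 * r q ^ e * ((b/a) * (q.1 + q.1))) with hg1def
  set g2 : ℝ × ℝ → ℝ := fun q => (3/4 : ℝ) * ((2:ℝ)/3 * r q ^ e * ((a/b) * (q.2 + q.2))) with hg2def
  have hev1 : (fun q => fderiv ℝ (fun q : ℝ × ℝ => t + 3 / 4 * (r q) ^ ((2:ℝ)/3)) q (1,0))
      =ᶠ[nhds p] g1 := by
    filter_upwards [hfd] with q hq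
    rw [hq]
    simp [hDtdef, hLrdef, hg1def]
    ring
  have hev2 : (fun q => fderiv ℝ (fun q : ℝ × ℝ => t + 3 / 4 * (r q) ^ ((2:ℝ)/3)) q (0,1))
      =ᶠ[nhds p] g2 := by
    filter_upwards [hfd] with q hq
    rw [hq]
    simp [hDtdef, hLrdef, hg2def]
    ring
  have hrp := hrpos p hp
  have hrpow := (hr p).rpow_const (p := (2:ℝ)/3) (Or.inl hrp.ne')
  have hrpow' := (hr p).rpow_const (p := e) (Or.inl hrp.ne')
  set G1 : ℝ × ℝ →L[ℝ] ℝ :=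
      (3/4:ℝ) • (((2:ℝ)/3 * r p ^ e) •
          ((b/a) • ((ContinuousLinearMap.fst ℝ ℝ ℝ) + (ContinuousLinearMap.fst ℝ ℝ ℝ)))
        + ((b/a) * (p.1 + p.1)) • (((2:ℝ)/3) • ((e * r p ^ (e-1)) • Lr p))) with hG1def
  set G2 : ℝ × ℝ →L[ℝ] ℝ :=
      (3/4:ℝ) • (((2:ℝ)/3 * r p ^ e) •
          ((a/b) • ((ContinuousLinearMap.snd ℝ ℝ ℝ) + (ContinuousLinearMap.snd ℝ ℝ ℝ)))
        + ((a/b) * (p.2 + p.2)) • (((2:ℝ)/3) • ((e * r p ^ (e-1)) • Lr p))) with hG2def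
  have hg1' : HasFDerivAt g1 G1 p := by
    have hf : HasFDerivAt (fun q : ℝ × ℝ => (2:ℝ)/3 * r q ^ e)
        (((2:ℝ)/3) • ((e * r p ^ (e-1)) • Lr p)) p := hrpow'.const_mul _
    have hg : HasFDerivAt (fun q : ℝ × ℝ => (b/a) * (q.1 + q.1))
        ((b/a) • ((ContinuousLinearMap.fst ℝ ℝ ℝ) + (ContinuousLinearMap.fst ℝ ℝ ℝ))) p :=
      (hasFDerivAt_fst.add hasFDerivAt_fst).const_mul _
    exact (hf.mul hg).const_mul _
  have hg2' : HasFDerivAt g2 G2 p := by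
    have hf : HasFDerivAt (fun q : ℝ × ℝ => (2:ℝ)/3 * r q ^ e)
        (((2:ℝ)/3) • ((e * r p ^ (e-1)) • Lr p)) p := hrpow'.const_mul _
    have hg : HasFDerivAt (fun q : ℝ × ℝ => (a/b) * (q.2 + q.2))
        ((a/b) • ((ContinuousLinearMap.snd ℝ ℝ ℝ) + (ContinuousLinearMap.snd ℝ ℝ ℝ))) p :=
      (hasFDerivAt_snd.add hasFDerivAt_snd).const_mul _
    exact (hf.mul hg).const_mul _
  have hfd1 : fderiv ℝ
      (fun q => fderiv ℝ (fun q : ℝ × ℝ => t + 3 / 4 * (r q) ^ ((2:ℝ)/3)) q (1,0)) p = G1 :=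
    hev1.fderiv_eq.trans hg1'.fderiv
  have hfd2 : fderiv ℝ
      (fun q => fderiv ℝ (fun q : ℝ × ℝ => t + 3 / 4 * (r q) ^ ((2:ℝ)/3)) q (0,1)) p = G2 :=
    hev2.fderiv_eq.trans hg2'.fderiv
  refine ⟨?_, ?_, ?_⟩
  · have hrc : ContDiffAt ℝ 2 r p :=
      (contDiffAt_const.mul (contDiffAt_fst.pow 2)).add
        (contDiffAt_const.mul (contDiffAt_snd.pow 2))
    exact contDiffAt_const.mul (hrc.rpow_const_of_ne hrp.ne')
  · simpa using (hasDerivAt_id t).add_const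
      ((3:ℝ) / 4 * ((b / a) * p.1 ^ 2 + (a / b) * p.2 ^ 2) ^ ((2 : ℝ) / 3))
  · show Gop (fun q : ℝ × ℝ => t + 3 / 4 * (r q) ^ ((2:ℝ)/3)) p = 1
    simp only [Gop]
    rw [hfd1, hfd2, (hu p hp).fderiv]
    simp only [hG1def, hG2def, hDtdef, hLrdef, ContinuousLinearMap.add_apply,
      ContinuousLinearMap.smul_apply, ContinuousLinearMap.coe_fst', ContinuousLinearMap.coe_snd',
      smul_eq_mul]
    have hA3 : r p ^ e * r p ^ e * r p ^ e * (b / a * p.1 ^ 2 + a / b * p.2 ^ 2) = 1 := by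
      have h1 : r p ^ e * r p ^ e * r p ^ e = (r p)⁻¹ := by
        rw [← Real.rpow_add hrp, ← Real.rpow_add hrp, hedef]
        norm_num
        rw [show (-1 : ℝ) = ((-1 : ℤ) : ℝ) by norm_num, Real.rpow_intCast]
        simp
      rw [h1, show (b / a * p.1 ^ 2 + a / b * p.2 ^ 2) = r p from rfl]
      exact inv_mul_cancel₀ hrp.ne'
    have hc : (b / a) * (a / b) = 1 := by field_simp
    linear_combination ((b / a) * (a / b)) * hA3 + hc
end

section
/- Nondecreasing decomposition of the regularized function: for K, L > 0 define A^{δ,+}(p,q) := A^δ(max(p,0), max(q,0)) and A^{δ,−}(p,q) := A^δ(min(p,0), min(q,0)). Then A^{δ,+} is nonnegative and nondecreasing in each variable, A^{δ,−} is nonpositive and nondecreasing in each variable, and for all p, q ∈ ℝ one has −A^δ(p,q) = A^{δ,+}(|p|, −q) + A^{δ,−}(−|p|, −q). -/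
/-- `A(p,q) = cbrt(p² q)`. -/
noncomputable def Afun (p q : ℝ) : ℝ := cbrt (p ^ 2 * q)

/-- The regularized function `A^δ(p,q) = sgn(q) · min(|A(p,q)|, K|p|, L|q|)`. -/
noncomputable def Adelta (K L p q : ℝ) : ℝ :=
  Real.sign q * min (|Afun p q|) (min (K * |p|) (L * |q|))

/-- `A^{δ,+}(p,q) = A^δ(p⁺, q⁺)`. -/
noncomputable def AdeltaP (K L p q : ℝ) : ℝ := Adelta K L (max p 0) (max q 0)

/-- `A^{δ,−}(p,q) = A^δ(p⁻, q⁻)`. -/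
noncomputable def AdeltaM (K L p q : ℝ) : ℝ := Adelta K L (min p 0) (min q 0)

lemma abs_cbrt (r : ℝ) : |cbrt r| = |r| ^ ((1 : ℝ) / 3) := by
  unfold cbrt
  rcases lt_trichotomy r 0 with h | h | h
  · rw [Real.sign_of_neg h, abs_mul]
    simp [abs_of_nonneg (Real.rpow_nonneg (abs_nonneg r) _)]
  · simp [h]
  · rw [Real.sign_of_pos h, abs_mul]
    simp [abs_of_nonneg (Real.rpow_nonneg (abs_nonneg r) _)]

lemma abs_Afun (p q : ℝ) : |Afun p q| = (p ^ 2 * |q|) ^ ((1 : ℝ) / 3) := by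
  rw [Afun, abs_cbrt, abs_mul, abs_pow, sq_abs]

lemma Adelta_zero (K L p : ℝ) : Adelta K L p 0 = 0 := by
  simp [Adelta]

lemma Adelta_nonneg (K L : ℝ) (hK : 0 < K) (hL : 0 < L) {p q : ℝ} (hq : 0 ≤ q) :
    0 ≤ Adelta K L p q := by
  rcases hq.eq_or_lt with h | h
  · rw [← h, Adelta_zero]
  · rw [Adelta, Real.sign_of_pos h, one_mul]
    refine le_min (abs_nonneg _) (le_min ?_ ?_) <;> positivity

lemma Adelta_mono (K L : ℝ) (hK : 0 < K) (hL : 0 < L) {p₁ p₂ q₁ q₂ : ℝ}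
    (hp1 : 0 ≤ p₁) (hq1 : 0 ≤ q₁) (hp : p₁ ≤ p₂) (hq : q₁ ≤ q₂) :
    Adelta K L p₁ q₁ ≤ Adelta K L p₂ q₂ := by
  rcases hq1.eq_or_lt with h | h
  · rw [← h, Adelta_zero]
    exact Adelta_nonneg K L hK hL (h ▸ hq)
  · have hq2 : 0 < q₂ := h.trans_le hq
    rw [Adelta, Adelta, Real.sign_of_pos h, Real.sign_of_pos hq2, one_mul, one_mul]
    refine min_le_min ?_ (min_le_min ?_ ?_)
    · rw [abs_Afun, abs_Afun, abs_of_nonneg h.le, abs_of_nonneg hq2.le]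
      refine Real.rpow_le_rpow (by positivity) ?_ (by norm_num)
      gcongr
    · rw [abs_of_nonneg hp1, abs_of_nonneg (hp1.trans hp)]
      gcongr
    · rw [abs_of_nonneg h.le, abs_of_nonneg hq2.le]
      gcongr

lemma Adelta_neg_neg (K L p q : ℝ) : Adelta K L (-p) (-q) = -Adelta K L p q := by
  rw [Adelta, Adelta, abs_Afun, abs_Afun, neg_sq, abs_neg, abs_neg, Real.sign_neg, neg_mul]

lemma Adelta_absp (K L p q : ℝ) : Adelta K L |p| q = Adelta K L p q := by
  rw [Adelta, Adelta, abs_Afun, abs_Afun, sq_abs, abs_abs]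

lemma AdeltaM_eq (K L p q : ℝ) : AdeltaM K L p q = -AdeltaP K L (-p) (-q) := by
  rw [AdeltaM, AdeltaP, ← Adelta_neg_neg]
  congr 1 <;> · rw [← neg_zero, max_neg_neg, neg_neg, neg_zero]

/-- Nondecreasing decomposition of the regularized function: `A^{δ,+}` is nonnegative and
nondecreasing, `A^{δ,−}` is nonpositive and nondecreasing, and
`−A^δ(p,q) = A^{δ,+}(|p|,−q) + A^{δ,−}(−|p|,−q)`. -/
theorem Adelta_nondecreasing_decomposition (K L : ℝ) (hK : 0 < K) (hL : 0 < L) :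
    (∀ p q : ℝ, 0 ≤ AdeltaP K L p q) ∧
    (∀ p₁ q₁ p₂ q₂ : ℝ, p₁ ≤ p₂ → q₁ ≤ q₂ → AdeltaP K L p₁ q₁ ≤ AdeltaP K L p₂ q₂) ∧
    (∀ p q : ℝ, AdeltaM K L p q ≤ 0) ∧
    (∀ p₁ q₁ p₂ q₂ : ℝ, p₁ ≤ p₂ → q₁ ≤ q₂ → AdeltaM K L p₁ q₁ ≤ AdeltaM K L p₂ q₂) ∧
    (∀ p q : ℝ, -Adelta K L p q = AdeltaP K L |p| (-q) + AdeltaM K L (-|p|) (-q)) := by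
  have hPn : ∀ p q : ℝ, 0 ≤ AdeltaP K L p q := fun p q =>
    Adelta_nonneg K L hK hL (le_max_right q 0)
  have hPm : ∀ p₁ q₁ p₂ q₂ : ℝ, p₁ ≤ p₂ → q₁ ≤ q₂ →
      AdeltaP K L p₁ q₁ ≤ AdeltaP K L p₂ q₂ := fun p₁ q₁ p₂ q₂ hp hq =>
    Adelta_mono K L hK hL (le_max_right p₁ 0) (le_max_right q₁ 0)
      (max_le_max hp le_rfl) (max_le_max hq le_rfl)
  refine ⟨hPn, hPm, ?_, ?_, ?_⟩
  · intro p q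
    rw [AdeltaM_eq, neg_nonpos]
    exact hPn _ _
  · intro p₁ q₁ p₂ q₂ hp hq
    rw [AdeltaM_eq, AdeltaM_eq]
    exact neg_le_neg (hPm _ _ _ _ (neg_le_neg hp) (neg_le_neg hq))
  · intro p q
    rw [AdeltaM_eq, AdeltaP, AdeltaP, neg_neg, neg_neg, max_eq_left (abs_nonneg p)]
    have h1 : Adelta K L |p| (-q) = -Adelta K L p q := by
      rw [← Adelta_absp K L p q, ← Adelta_neg_neg K L |p| q,
        ← Adelta_absp K L (-|p|) (-q), abs_neg, abs_abs]
    rcases le_total q 0 with h | h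
    · rw [max_eq_left (neg_nonneg.mpr h), max_eq_right h, Adelta_zero, h1]
      ring
    · rw [max_eq_right (neg_nonpos.mpr h), max_eq_left h, Adelta_zero, Adelta_absp]
      ring
end

section
/- Regularization error bound: let K, L > 0 satisfy K·√L ≥ 1. Then for all p, q ∈ ℝ, |A^δ(p,q) − A(p,q)| ≤ max( (4/(27K²))·|q| , (2/(3√(3L)))·|p| ). -/
lemma amgm3 {a b : ℝ} (ha : 0 ≤ a) (hb : 0 ≤ b) :
    (a ^ 2 * b) ^ ((1 : ℝ) / 3) ≤ (2 * a + b) / 3 := by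
  have h := Real.geom_mean_le_arith_mean3_weighted
    (by norm_num : (0:ℝ) ≤ 1/3) (by norm_num : (0:ℝ) ≤ 1/3) (by norm_num : (0:ℝ) ≤ 1/3)
    ha ha hb (by norm_num)
  have e : (a ^ 2 * b) ^ ((1 : ℝ) / 3)
      = a ^ ((1:ℝ)/3) * a ^ ((1:ℝ)/3) * b ^ ((1:ℝ)/3) := by
    rw [Real.mul_rpow (by positivity) hb, ← Real.rpow_natCast a 2,
      ← Real.rpow_mul ha, ← Real.rpow_add' ha (by norm_num)]
    norm_num
  rw [e]
  linarith [h]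

lemma key1 {K P Q : ℝ} (hK : 0 < K) (hP : 0 ≤ P) (hQ : 0 ≤ Q) :
    (P ^ 2 * Q) ^ ((1 : ℝ) / 3) - K * P ≤ 4 / (27 * K ^ 2) * Q := by
  have h := amgm3 (a := 3 * K / 2 * P) (b := 4 * Q / (9 * K ^ 2)) (by positivity) (by positivity)
  have e : (3 * K / 2 * P) ^ 2 * (4 * Q / (9 * K ^ 2)) = P ^ 2 * Q := by
    field_simp; ring
  have e2 : (2 * (3 * K / 2 * P) + 4 * Q / (9 * K ^ 2)) / 3
      = K * P + 4 / (27 * K ^ 2) * Q := by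
    field_simp; ring
  rw [e, e2] at h
  linarith

lemma key2 {L P Q : ℝ} (hL : 0 < L) (hP : 0 ≤ P) (hQ : 0 ≤ Q) :
    (P ^ 2 * Q) ^ ((1 : ℝ) / 3) - L * Q ≤ 2 / (3 * Real.sqrt (3 * L)) * P := by
  set s := Real.sqrt (3 * L) with hs
  have hs0 : 0 < s := Real.sqrt_pos.mpr (by linarith)
  have hs2 : s ^ 2 = 3 * L := Real.sq_sqrt (by linarith)
  have h := amgm3 (a := P / s) (b := 3 * L * Q) (by positivity) (by positivity)
  have e : (P / s) ^ 2 * (3 * L * Q) = P ^ 2 * Q := by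
    rw [div_pow, hs2]; field_simp
  have e2 : (2 * (P / s) + 3 * L * Q) / 3 = 2 / (3 * s) * P + L * Q := by
    field_simp
  rw [e, e2] at h
  linarith

/-- Regularization error bound: for `K√L ≥ 1`,
`|A^δ(p,q) − A(p,q)| ≤ max((4/(27K²))|q|, (2/(3√(3L)))|p|)`. -/
theorem Adelta_error_bound (K L : ℝ) (hK : 0 < K) (hL : 0 < L)
    (h1 : 1 ≤ K * Real.sqrt L) :
    ∀ p q : ℝ,
      |Adelta K L p q - Afun p q| ≤
        max ((4 / (27 * K ^ 2)) * |q|) ((2 / (3 * Real.sqrt (3 * L))) * |p|) := by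
  intro p q
  have hM : |Afun p q| = (|p| ^ 2 * |q|) ^ ((1 : ℝ) / 3) := by
    rw [Afun, abs_cbrt, abs_mul, abs_pow, sq_abs, ← sq_abs]
  have hsign : Afun p q = Real.sign q * |Afun p q| := by
    by_cases hp : p = 0
    · simp [Afun, cbrt, hp]
    · have hps : (0:ℝ) < p ^ 2 := by positivity
      rcases lt_trichotomy q 0 with h | h | h
      · have hn : p ^ 2 * q < 0 := mul_neg_of_pos_of_neg hps h
        rw [Real.sign_of_neg h, Afun, abs_cbrt, cbrt, Real.sign_of_neg hn]
      · simp [Afun, cbrt, h]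
      · have hn : 0 < p ^ 2 * q := mul_pos hps h
        rw [Real.sign_of_pos h, Afun, abs_cbrt, cbrt, Real.sign_of_pos hn]
  set m := min (|Afun p q|) (min (K * |p|) (L * |q|)) with hm
  have hmle : m ≤ |Afun p q| := min_le_left _ _
  have habs_sign : |Real.sign q| ≤ 1 := by
    rcases lt_trichotomy q 0 with h | h | h
    · rw [Real.sign_of_neg h]; norm_num
    · simp [h]
    · rw [Real.sign_of_pos h]; norm_num
  have hstep : |Adelta K L p q - Afun p q| ≤ |Afun p q| - m := by
    have he : Adelta K L p q - Afun p q = Real.sign q * (m - |Afun p q|) := by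
      rw [Adelta, ← hm, mul_sub, ← hsign]
    have h2 : abs (m - abs (Afun p q)) = |Afun p q| - m := by
      rw [abs_sub_comm, abs_of_nonneg (by linarith)]
    rw [he, abs_mul, h2]
    exact mul_le_of_le_one_left (by linarith) habs_sign
  refine hstep.trans ?_
  rcases le_total (|Afun p q|) (min (K * |p|) (L * |q|)) with h | h
  · rw [hm, min_eq_left h]
    have : (0:ℝ) ≤ (4 / (27 * K ^ 2)) * |q| := by positivity
    simp only [sub_self]
    exact le_max_of_le_left this
  · rw [hm, min_eq_right h]
    rcases le_total (K * |p|) (L * |q|) with h2 | h2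
    · rw [min_eq_left h2]
      refine le_max_of_le_left ?_
      rw [hM]
      have := key1 (P := |p|) (Q := |q|) hK (abs_nonneg p) (abs_nonneg q)
      linarith
    · rw [min_eq_right h2]
      refine le_max_of_le_right ?_
      rw [hM]
      have := key2 (P := |p|) (Q := |q|) hL (abs_nonneg p) (abs_nonneg q)
      linarith
end

section
/- Lipschitz estimate for the regularized function: let K, L > 0 satisfy K·√L ≥ 1. Then for all p₁, p₂, q₁, q₂ ∈ ℝ, |A^δ(p₁,q₁) − A^δ(p₂,q₂)| ≤ K·|p₁ − p₂| + L·|q₁ − q₂|. In particular, A^δ is Lipschitz continuous on ℝ². -/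
namespace AdeltaAux

noncomputable def G (a b : ℝ) : ℝ := (a ^ 2 * b) ^ ((1:ℝ)/3)
noncomputable def F (K L a b : ℝ) : ℝ := min (G a b) (min (K * a) (L * b))

lemma abs_cbrt (r : ℝ) : |cbrt r| = |r| ^ ((1:ℝ)/3) := by
  unfold cbrt
  rcases lt_trichotomy r 0 with h|h|h
  · rw [Real.sign_of_neg h, abs_mul, abs_neg, abs_one, one_mul,
      abs_of_nonneg (Real.rpow_nonneg (abs_nonneg r) _)]
  · subst h; simp [Real.zero_rpow]
  · rw [Real.sign_of_pos h, abs_mul, abs_one, one_mul,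
      abs_of_nonneg (Real.rpow_nonneg (abs_nonneg r) _)]

lemma Adelta_eq (K L p q : ℝ) : Adelta K L p q = Real.sign q * F K L |p| |q| := by
  unfold Adelta F Afun G
  rw [abs_cbrt, abs_mul, abs_pow]



lemma G_nonneg (a b : ℝ) (hb : 0 ≤ b) : 0 ≤ G a b :=
  Real.rpow_nonneg (mul_nonneg (sq_nonneg a) hb) _

lemma G_eq (a b : ℝ) (ha : 0 ≤ a) (hb : 0 ≤ b) :
    G a b = a ^ ((2:ℝ)/3) * b ^ ((1:ℝ)/3) := by
  unfold G
  rw [Real.mul_rpow (sq_nonneg a) hb]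
  congr 1
  rw [← Real.rpow_natCast a 2, ← Real.rpow_mul ha]
  norm_num

lemma G_mono_a {a1 a2 : ℝ} (b : ℝ) (hb : 0 ≤ b) (h2 : 0 ≤ a2) (h12 : a2 ≤ a1) :
    G a2 b ≤ G a1 b := by
  apply Real.rpow_le_rpow (mul_nonneg (sq_nonneg _) hb)
  · exact mul_le_mul_of_nonneg_right (pow_le_pow_left₀ h2 h12 2) hb
  · norm_num

lemma G_mono_b {b1 b2 : ℝ} (a : ℝ) (h2 : 0 ≤ b2) (h12 : b2 ≤ b1) :
    G a b2 ≤ G a b1 := by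
  apply Real.rpow_le_rpow (mul_nonneg (sq_nonneg _) h2)
  · exact mul_le_mul_of_nonneg_left h12 (sq_nonneg a)
  · norm_num

lemma key_a (K b : ℝ) (hK : 0 < K) (hb : 0 ≤ b) {a1 a2 : ℝ} (h2 : 0 ≤ a2) (h12 : a2 ≤ a1) :
    min (G a1 b) (K * a1) ≤ min (G a2 b) (K * a2) + K * (a1 - a2) := by
  rcases le_or_gt (K * a2) (G a2 b) with h | h
  · rw [min_eq_right h]
    calc min (G a1 b) (K * a1) ≤ K * a1 := min_le_right _ _
      _ = K * a2 + K * (a1 - a2) := by ring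
  · have ha2pos : 0 < a2 := by
      have h0 : 0 < K * a2 := lt_of_le_of_lt (G_nonneg a2 b hb) h
      nlinarith
    have h1pos : 0 < a1 := lt_of_lt_of_le ha2pos h12
    rw [min_eq_left h.le]
    have hGa1 := G_eq a1 b h1pos.le hb
    have hGa2 := G_eq a2 b ha2pos.le hb
    set c := b ^ ((1:ℝ)/3) with hcdef
    have hc0 : 0 ≤ c := Real.rpow_nonneg hb _
    have ha2split : a2 ^ ((1:ℝ)/3) * a2 ^ ((2:ℝ)/3) = a2 := by
      rw [← Real.rpow_add ha2pos]; norm_num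
    have h23pos : (0:ℝ) < a2 ^ ((2:ℝ)/3) := Real.rpow_pos_of_pos ha2pos _
    -- c < K * a2 ^ (1/3)
    have hcK : c ≤ K * a2 ^ ((1:ℝ)/3) := by
      rw [hGa2] at h
      nlinarith [h23pos]
    have hm : a2 ^ ((2:ℝ)/3) ≤ a1 ^ ((2:ℝ)/3) :=
      Real.rpow_le_rpow h2 h12 (by norm_num)
    have hkey : a1 ^ ((2:ℝ)/3) * a2 ^ ((1:ℝ)/3) ≤ a1 := by
      have h13 : a2 ^ ((1:ℝ)/3) ≤ a1 ^ ((1:ℝ)/3) :=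
        Real.rpow_le_rpow h2 h12 (by norm_num)
      calc a1 ^ ((2:ℝ)/3) * a2 ^ ((1:ℝ)/3)
          ≤ a1 ^ ((2:ℝ)/3) * a1 ^ ((1:ℝ)/3) :=
            mul_le_mul_of_nonneg_left h13 (Real.rpow_nonneg h1pos.le _)
        _ = a1 := by rw [← Real.rpow_add h1pos]; norm_num
    calc min (G a1 b) (K * a1) ≤ G a1 b := min_le_left _ _
      _ = a1 ^ ((2:ℝ)/3) * c := hGa1
      _ ≤ G a2 b + K * (a1 - a2) := by
          rw [hGa2]
          nlinarith [mul_le_mul_of_nonneg_right hcK (sub_nonneg.2 hm), ha2split]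

lemma key_b (L a : ℝ) (hL : 0 < L) (ha : 0 ≤ a) {b1 b2 : ℝ} (h2 : 0 ≤ b2) (h12 : b2 ≤ b1) :
    min (G a b1) (L * b1) ≤ min (G a b2) (L * b2) + L * (b1 - b2) := by
  rcases le_or_gt (L * b2) (G a b2) with h | h
  · rw [min_eq_right h]
    calc min (G a b1) (L * b1) ≤ L * b1 := min_le_right _ _
      _ = L * b2 + L * (b1 - b2) := by ring
  · have hb2pos : 0 < b2 := by
      have h0 : 0 < L * b2 := lt_of_le_of_lt (G_nonneg a b2 h2) h
      nlinarith
    have h1pos : 0 < b1 := lt_of_lt_of_le hb2pos h12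
    rw [min_eq_left h.le]
    have hGb1 := G_eq a b1 ha h1pos.le
    have hGb2 := G_eq a b2 ha hb2pos.le
    set d := a ^ ((2:ℝ)/3) with hddef
    have hd0 : 0 ≤ d := Real.rpow_nonneg ha _
    have hb2split : b2 ^ ((2:ℝ)/3) * b2 ^ ((1:ℝ)/3) = b2 := by
      rw [← Real.rpow_add hb2pos]; norm_num
    have h13pos : (0:ℝ) < b2 ^ ((1:ℝ)/3) := Real.rpow_pos_of_pos hb2pos _
    have hdL : d ≤ L * b2 ^ ((2:ℝ)/3) := by
      rw [hGb2] at h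
      nlinarith [h13pos]
    have hm : b2 ^ ((1:ℝ)/3) ≤ b1 ^ ((1:ℝ)/3) :=
      Real.rpow_le_rpow h2 h12 (by norm_num)
    have hkey : b2 ^ ((2:ℝ)/3) * b1 ^ ((1:ℝ)/3) ≤ b1 := by
      have h23 : b2 ^ ((2:ℝ)/3) ≤ b1 ^ ((2:ℝ)/3) :=
        Real.rpow_le_rpow h2 h12 (by norm_num)
      calc b2 ^ ((2:ℝ)/3) * b1 ^ ((1:ℝ)/3)
          ≤ b1 ^ ((2:ℝ)/3) * b1 ^ ((1:ℝ)/3) :=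
            mul_le_mul_of_nonneg_right h23 (Real.rpow_nonneg (h2.trans h12) _)
        _ = b1 := by rw [← Real.rpow_add h1pos]; norm_num
    calc min (G a b1) (L * b1) ≤ G a b1 := min_le_left _ _
      _ = d * b1 ^ ((1:ℝ)/3) := hGb1
      _ ≤ G a b2 + L * (b1 - b2) := by
          rw [hGb2]
          nlinarith [mul_le_mul_of_nonneg_right hdL (sub_nonneg.2 hm), hb2split]




lemma abs_min_const (x y t : ℝ) : |min x t - min y t| ≤ |x - y| := by
  have := abs_min_sub_min_le_max x t y t
  simpa using this

lemma F_nonneg (K L a b : ℝ) (hK : 0 ≤ K) (hL : 0 ≤ L) (ha : 0 ≤ a) (hb : 0 ≤ b) :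
    0 ≤ F K L a b :=
  le_min (G_nonneg a b hb) (le_min (mul_nonneg hK ha) (mul_nonneg hL hb))

lemma F_le (K L a b : ℝ) : F K L a b ≤ L * b :=
  le_trans (min_le_right _ _) (min_le_right _ _)

lemma F_rw_a (K L a b : ℝ) : F K L a b = min (min (G a b) (K * a)) (L * b) := by
  rw [F, min_assoc]

lemma F_rw_b (K L a b : ℝ) : F K L a b = min (min (G a b) (L * b)) (K * a) := by
  rw [F, min_comm (K * a) (L * b), min_assoc]

lemma lipF_a (K L : ℝ) (hK : 0 < K) {a1 a2 : ℝ} (b : ℝ) (hb : 0 ≤ b)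
    (h1 : 0 ≤ a1) (h2 : 0 ≤ a2) :
    |F K L a1 b - F K L a2 b| ≤ K * |a1 - a2| := by
  rw [F_rw_a, F_rw_a]
  refine (abs_min_const _ _ _).trans ?_
  -- |min (G a1 b) (K*a1) - min (G a2 b) (K*a2)| ≤ K * |a1 - a2|
  rcases le_total a2 a1 with h | h
  · have hkey := key_a K b hK hb h2 h
    have hmono : min (G a2 b) (K * a2) ≤ min (G a1 b) (K * a1) :=
      min_le_min (G_mono_a b hb h2 h) (mul_le_mul_of_nonneg_left h hK.le)
    rw [abs_of_nonneg (sub_nonneg.2 hmono), abs_of_nonneg (sub_nonneg.2 h)]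
    linarith
  · have hkey := key_a K b hK hb h1 h
    have hmono : min (G a1 b) (K * a1) ≤ min (G a2 b) (K * a2) :=
      min_le_min (G_mono_a b hb h1 h) (mul_le_mul_of_nonneg_left h hK.le)
    rw [abs_of_nonpos (sub_nonpos.2 hmono), abs_of_nonpos (sub_nonpos.2 h)]
    linarith

lemma lipF_b (K L : ℝ) (hL : 0 < L) {b1 b2 : ℝ} (a : ℝ) (ha : 0 ≤ a)
    (h1 : 0 ≤ b1) (h2 : 0 ≤ b2) :
    |F K L a b1 - F K L a b2| ≤ L * |b1 - b2| := by
  rw [F_rw_b, F_rw_b]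
  refine (abs_min_const _ _ _).trans ?_
  rcases le_total b2 b1 with h | h
  · have hkey := key_b L a hL ha h2 h
    have hmono : min (G a b2) (L * b2) ≤ min (G a b1) (L * b1) :=
      min_le_min (G_mono_b a h2 h) (mul_le_mul_of_nonneg_left h hL.le)
    rw [abs_of_nonneg (sub_nonneg.2 hmono), abs_of_nonneg (sub_nonneg.2 h)]
    linarith
  · have hkey := key_b L a hL ha h1 h
    have hmono : min (G a b1) (L * b1) ≤ min (G a b2) (L * b2) :=
      min_le_min (G_mono_b a h1 h) (mul_le_mul_of_nonneg_left h hL.le)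
    rw [abs_of_nonpos (sub_nonpos.2 hmono), abs_of_nonpos (sub_nonpos.2 h)]
    linarith

lemma lipF (K L : ℝ) (hK : 0 < K) (hL : 0 < L) {a1 a2 b1 b2 : ℝ}
    (ha1 : 0 ≤ a1) (ha2 : 0 ≤ a2) (hb1 : 0 ≤ b1) (hb2 : 0 ≤ b2) :
    |F K L a1 b1 - F K L a2 b2| ≤ K * |a1 - a2| + L * |b1 - b2| := by
  calc |F K L a1 b1 - F K L a2 b2|
      ≤ |F K L a1 b1 - F K L a2 b1| + |F K L a2 b1 - F K L a2 b2| := abs_sub_le _ _ _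
    _ ≤ K * |a1 - a2| + L * |b1 - b2| :=
        add_le_add (lipF_a K L hK b1 hb1 ha1 ha2) (lipF_b K L hL a2 ha2 hb1 hb2)


lemma main_pt (K L : ℝ) (hK : 0 < K) (hL : 0 < L) (p₁ p₂ q₁ q₂ : ℝ) :
    abs (Real.sign q₁ * F K L |p₁| |q₁| - Real.sign q₂ * F K L |p₂| |q₂|) ≤
      K * |p₁ - p₂| + L * |q₁ - q₂| := by
  set F1 := F K L |p₁| |q₁| with hF1
  set F2 := F K L |p₂| |q₂| with hF2
  have hF1n : 0 ≤ F1 := F_nonneg _ _ _ _ hK.le hL.le (abs_nonneg _) (abs_nonneg _)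
  have hF2n : 0 ≤ F2 := F_nonneg _ _ _ _ hK.le hL.le (abs_nonneg _) (abs_nonneg _)
  have hF1le : F1 ≤ L * |q₁| := F_le _ _ _ _
  have hF2le : F2 ≤ L * |q₂| := F_le _ _ _ _
  have hlip : |F1 - F2| ≤ K * |p₁ - p₂| + L * |q₁ - q₂| := by
    refine (lipF K L hK hL (abs_nonneg p₁) (abs_nonneg p₂) (abs_nonneg q₁)
      (abs_nonneg q₂)).trans ?_
    exact add_le_add
      (mul_le_mul_of_nonneg_left (abs_abs_sub_abs_le_abs_sub _ _) hK.le)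
      (mul_le_mul_of_nonneg_left (abs_abs_sub_abs_le_abs_sub _ _) hL.le)
  have hKp : 0 ≤ K * |p₁ - p₂| := mul_nonneg hK.le (abs_nonneg _)
  rcases lt_trichotomy q₁ 0 with h1 | h1 | h1 <;>
    rcases lt_trichotomy q₂ 0 with h2 | h2 | h2
  · -- both neg
    rw [Real.sign_of_neg h1, Real.sign_of_neg h2]
    calc |(-1) * F1 - (-1) * F2| = |F1 - F2| := by rw [← abs_neg]; ring_nf
      _ ≤ _ := hlip
  · -- q₁ < 0 = q₂
    subst h2
    rw [Real.sign_of_neg h1, Real.sign_zero, zero_mul, sub_zero, abs_mul]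
    have : |(-1:ℝ)| * |F1| = F1 := by rw [abs_neg, abs_one, one_mul, abs_of_nonneg hF1n]
    rw [this]
    have : L * |q₁ - 0| = L * |q₁| := by rw [sub_zero]
    linarith [hF1le]
  · -- q₁ < 0 < q₂
    rw [Real.sign_of_neg h1, Real.sign_of_pos h2]
    have habs : |(-1) * F1 - 1 * F2| = F1 + F2 := by
      rw [neg_one_mul, one_mul]
      rw [abs_of_nonpos (by linarith)]; ring
    have hq : |q₁ - q₂| = |q₁| + |q₂| := by
      rw [abs_of_neg h1, abs_of_pos h2, abs_of_neg (by linarith : q₁ - q₂ < 0)]; ring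
    rw [habs, hq]
    nlinarith
  · -- q₁ = 0, q₂ < 0
    subst h1
    rw [Real.sign_of_neg h2, Real.sign_zero, zero_mul, zero_sub, abs_neg, abs_mul]
    have : |(-1:ℝ)| * |F2| = F2 := by rw [abs_neg, abs_one, one_mul, abs_of_nonneg hF2n]
    rw [this]
    have : L * |0 - q₂| = L * |q₂| := by rw [zero_sub, abs_neg]
    linarith [hF2le]
  · -- both zero
    subst h1; subst h2
    simp [Real.sign_zero]
    positivity
  · -- q₁ = 0 < q₂
    subst h1
    rw [Real.sign_of_pos h2, Real.sign_zero, zero_mul, zero_sub, abs_neg, one_mul,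
      abs_of_nonneg hF2n]
    have : L * |0 - q₂| = L * |q₂| := by rw [zero_sub, abs_neg]
    linarith [hF2le]
  · -- q₁ > 0 > q₂
    rw [Real.sign_of_pos h1, Real.sign_of_neg h2]
    have habs : |1 * F1 - (-1) * F2| = F1 + F2 := by
      rw [neg_one_mul, one_mul, sub_neg_eq_add, abs_of_nonneg (by linarith)]
    have hq : |q₁ - q₂| = |q₁| + |q₂| := by
      rw [abs_of_pos h1, abs_of_neg h2, abs_of_pos (by linarith : 0 < q₁ - q₂)]; ring
    rw [habs, hq]
    nlinarith
  · -- q₁ > 0 = q₂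
    subst h2
    rw [Real.sign_of_pos h1, Real.sign_zero, zero_mul, sub_zero, one_mul,
      abs_of_nonneg hF1n]
    have : L * |q₁ - 0| = L * |q₁| := by rw [sub_zero]
    linarith [hF1le]
  · -- both pos
    rw [Real.sign_of_pos h1, Real.sign_of_pos h2, one_mul, one_mul]
    exact hlip

end AdeltaAux

/-- Lipschitz estimate for the regularized function: for `K√L ≥ 1`,
`|A^δ(p₁,q₁) − A^δ(p₂,q₂)| ≤ K|p₁−p₂| + L|q₁−q₂|`; in particular `A^δ` is Lipschitz
continuous on `ℝ²`. -/
theorem Adelta_lipschitz (K L : ℝ) (hK : 0 < K) (hL : 0 < L)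
    (h1 : 1 ≤ K * Real.sqrt L) :
    (∀ p₁ p₂ q₁ q₂ : ℝ,
      |Adelta K L p₁ q₁ - Adelta K L p₂ q₂| ≤ K * |p₁ - p₂| + L * |q₁ - q₂|) ∧
    ∃ C : NNReal, LipschitzWith C (fun pq : ℝ × ℝ => Adelta K L pq.1 pq.2) := by
  have hpt : ∀ p₁ p₂ q₁ q₂ : ℝ,
      |Adelta K L p₁ q₁ - Adelta K L p₂ q₂| ≤ K * |p₁ - p₂| + L * |q₁ - q₂| := by
    intro p₁ p₂ q₁ q₂
    rw [AdeltaAux.Adelta_eq, AdeltaAux.Adelta_eq]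
    exact AdeltaAux.main_pt K L hK hL p₁ p₂ q₁ q₂
  refine ⟨hpt, (K + L).toNNReal, LipschitzWith.of_dist_le_mul fun x y => ?_⟩
  rw [Real.dist_eq, Prod.dist_eq, Real.dist_eq, Real.dist_eq,
    Real.coe_toNNReal _ (by positivity)]
  have hb := hpt x.1 y.1 x.2 y.2
  have h1 : |x.1 - y.1| ≤ max |x.1 - y.1| |x.2 - y.2| := le_max_left _ _
  have h2 : |x.2 - y.2| ≤ max |x.1 - y.1| |x.2 - y.2| := le_max_right _ _
  nlinarith [abs_nonneg (x.1 - y.1), abs_nonneg (x.2 - y.2)]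
end
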